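/- Every ball in infinite-dimensional hyperbolic space H has empty interior in the weak topology on H̄: no closed metric ball of H contains an open half-space of H̄. -/

import Mathlib

/-- In an infinite-dimensional real inner product space, for any two vectors there is a
unit vector orthogonal to both. -/
lemma exists_unit_orthogonal_pair {E : Type*} [NormedAddCommGroup E]
    [InnerProductSpace ℝ E] [CompleteSpace E] (hinf : ¬ FiniteDimensional ℝ E)
    (u x : E) : ∃ w : E, ‖w‖ = 1 ∧ (inner ℝ u w : ℝ) = 0 ∧ (inner ℝ x w : ℝ) = 0 := by
  set K : Submodule ℝ E := Submodule.span ℝ {u, x} with hK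
  haveI : FiniteDimensional ℝ K := by
    apply FiniteDimensional.span_of_finite
    exact (Set.finite_singleton x).insert u
  haveI : CompleteSpace K := FiniteDimensional.complete ℝ K
  have hKbot : Kᗮ ≠ ⊥ := by
    intro h
    have : K = ⊤ := (Submodule.orthogonal_eq_bot_iff).mp h
    have hfd : FiniteDimensional ℝ K := inferInstance
    rw [this] at hfd
    exact hinf ((Submodule.topEquiv : (⊤ : Submodule ℝ E) ≃ₗ[ℝ] E).finiteDimensional)
  obtain ⟨w0, hw0mem, hw0⟩ := Submodule.exists_mem_ne_zero_of_ne_bot hKbot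
  refine ⟨‖w0‖⁻¹ • w0, ?_, ?_, ?_⟩
  · simp [norm_smul, norm_ne_zero_iff.mpr hw0]
  · have := hw0mem u (Submodule.subset_span (by simp))
    simp [inner_smul_right, this]
  · have := hw0mem x (Submodule.subset_span (by simp))
    simp [inner_smul_right, this]

/-- In the Klein model of infinite-dimensional hyperbolic space (the open unit ball of
an infinite-dimensional Hilbert space, with `cosh d(p,y) = (1-⟨p,y⟩)/(√(1-‖p‖²)√(1-‖y‖²))`),
no closed hyperbolic ball contains a nonempty open half-space of `D̄`: metric balls have
empty interior for the weak topology on `H̄`. -/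
theorem hyperbolic_ball_contains_no_open_halfspace
    {E : Type*} [NormedAddCommGroup E] [InnerProductSpace ℝ E] [CompleteSpace E]
    (hinf : ¬ FiniteDimensional ℝ E)
    (p : E) (hp : ‖p‖ < 1) (R : ℝ) (u : E) (c : ℝ)
    (hne : {x : E | ‖x‖ ≤ 1 ∧ c < (inner ℝ x u : ℝ)}.Nonempty) :
    ¬ ({x : E | ‖x‖ ≤ 1 ∧ c < (inner ℝ x u : ℝ)} ⊆
        {y : E | ‖y‖ < 1 ∧
          (1 - (inner ℝ p y : ℝ)) / (Real.sqrt (1 - ‖p‖ ^ 2) * Real.sqrt (1 - ‖y‖ ^ 2))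
            ≤ Real.cosh R}) := by
  intro hsub
  obtain ⟨x, hx1, hxc⟩ := hne
  obtain ⟨w, hw1, hwu, hwx⟩ := exists_unit_orthogonal_pair hinf u x
  set t : ℝ := Real.sqrt (1 - ‖x‖ ^ 2) with ht
  set y : E := x + t • w with hy
  have hxw : (inner ℝ x (t • w) : ℝ) = 0 := by simp [inner_smul_right, hwx]
  have hyn : ‖y‖ = 1 := by
    have hsq : ‖y‖ ^ 2 = ‖x‖ ^ 2 + ‖t • w‖ ^ 2 := by
      rw [hy]
      rw [@norm_add_sq_real]
      rw [hxw]; ring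
    have htw : ‖t • w‖ ^ 2 = 1 - ‖x‖ ^ 2 := by
      rw [norm_smul, hw1, mul_one, Real.norm_eq_abs, sq_abs, ht,
        Real.sq_sqrt (by nlinarith [norm_nonneg x])]
    have : ‖y‖ ^ 2 = 1 := by rw [hsq, htw]; ring
    nlinarith [norm_nonneg y]
  have hyu : (inner ℝ y u : ℝ) = inner ℝ x u := by
    rw [hy, inner_add_left, inner_smul_left]
    have : (inner ℝ w u : ℝ) = 0 := by rw [real_inner_comm]; exact hwu
    simp [this]
  have hmem : y ∈ {x : E | ‖x‖ ≤ 1 ∧ c < (inner ℝ x u : ℝ)} := ⟨hyn.le, by rw [hyu]; exact hxc⟩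
  have := (hsub hmem).1
  rw [hyn] at this
  exact lt_irrefl _ this
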